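/- Conversely, in the polynomial ring ℚ[a_1,...,a_r], if the elementary symmetric polynomials satisfy e_k = e_1^k/k! for all 1 ≤ k ≤ r modulo an ideal I, then the power sums satisfy p_j ∈ I for all 2 ≤ j ≤ r. -/

import Mathlib

/-!
STATEMENT 5. In `ℚ[a_1, …, a_r]`, if the elementary symmetric polynomials satisfy
`e_k = e_1 ^ k / k!` for all `1 ≤ k ≤ r` modulo an ideal `I`, then the power sums
satisfy `p_j ∈ I` for all `2 ≤ j ≤ r`.
-/

open MvPolynomial

theorem psum_mem_of_esymm_eq_pow_div_factorial (r : ℕ)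
    (I : Ideal (MvPolynomial (Fin r) ℚ))
    (h : ∀ k : ℕ, 1 ≤ k → k ≤ r →
      (esymm (Fin r) ℚ k - ((k.factorial : ℚ)⁻¹) • (esymm (Fin r) ℚ 1) ^ k) ∈ I) :
    ∀ j : ℕ, 2 ≤ j → j ≤ r → psum (Fin r) ℚ j ∈ I := by
  intro j
  induction j using Nat.strong_induction_on with
  | _ j ih =>
  intro hj2 hjr
  obtain ⟨n, rfl⟩ : ∃ n, j = n + 2 := ⟨j - 2, by omega⟩
  rw [psum_eq_mul_esymm_sub_sum (Fin r) ℚ (n + 2) (by omega)]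
  have hmem : ((n + 1, 1) : ℕ × ℕ) ∈
      (Finset.HasAntidiagonal.antidiagonal (n + 2)).filter (fun a => a.1 ∈ Set.Ioo 0 (n + 2)) := by
    simp [Finset.mem_filter, Finset.HasAntidiagonal.mem_antidiagonal]
  rw [← Finset.sum_erase_add _ _ hmem]
  set A := ((-1 : MvPolynomial (Fin r) ℚ) ^ (n + 2 + 1) * ((n + 2 : ℕ) : MvPolynomial (Fin r) ℚ)
    * esymm (Fin r) ℚ (n + 2)) with hA
  set f : ℕ × ℕ → MvPolynomial (Fin r) ℚ :=
    fun a => (-1) ^ a.1 * esymm (Fin r) ℚ a.1 * psum (Fin r) ℚ a.2 with hf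
  have hS' : (∑ a ∈ ((Finset.HasAntidiagonal.antidiagonal (n + 2)).filter
      (fun a => a.1 ∈ Set.Ioo 0 (n + 2))).erase (n + 1, 1), f a) ∈ I := by
    apply Ideal.sum_mem
    intro b hb
    rw [Finset.mem_erase, Finset.mem_filter, Finset.HasAntidiagonal.mem_antidiagonal, Set.mem_Ioo] at hb
    obtain ⟨hne, hsum, h0, hlt⟩ := hb
    have hb2 : 2 ≤ b.2 := by
      rcases Nat.lt_or_ge b.2 2 with hc | hc
      · interval_cases h2 : b.2
        · omega
        · exfalso; apply hne
          have : b.1 = n + 1 := by omega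
          exact Prod.ext this h2
      · exact hc
    exact Ideal.mul_mem_left _ _ (ih b.2 (by omega) hb2 (by omega))
  have hkey : A - f (n + 1, 1) ∈ I := by
    have h1 := h (n + 1) (by omega) (by omega)
    have h2 := h (n + 2) (by omega) hjr
    have hne1 : (((n + 1).factorial : ℚ)) ≠ 0 := Nat.cast_ne_zero.mpr (n + 1).factorial_ne_zero
    have hfac : ((n : ℚ) + 2) * (((n + 2).factorial : ℚ))⁻¹ = (((n + 1).factorial : ℚ))⁻¹ := by
      rw [show (n + 2).factorial = (n + 2) * (n + 1).factorial from Nat.factorial_succ (n + 1)]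
      push_cast
      rw [mul_inv, ← mul_assoc, mul_inv_cancel₀ (by positivity), one_mul]
    have hC : (C ((n : ℚ) + 2) * C (((n + 2).factorial : ℚ))⁻¹ : MvPolynomial (Fin r) ℚ)
        = C (((n + 1).factorial : ℚ))⁻¹ := by rw [← C_mul, hfac]
    have hcast : ((n + 2 : ℕ) : MvPolynomial (Fin r) ℚ) = C ((n : ℚ) + 2) := by
      rw [show ((n : ℚ) + 2) = ((n + 2 : ℕ) : ℚ) by push_cast; ring, map_natCast]
    have heq : A - f (n + 1, 1) =
        (-1) ^ (n + 1) * (C ((n : ℚ) + 2) *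
          (esymm (Fin r) ℚ (n + 2) - (((n + 2).factorial : ℚ))⁻¹ • esymm (Fin r) ℚ 1 ^ (n + 2))
        - esymm (Fin r) ℚ 1 *
          (esymm (Fin r) ℚ (n + 1) - (((n + 1).factorial : ℚ))⁻¹ • esymm (Fin r) ℚ 1 ^ (n + 1))) := by
      simp only [hf, hA, psum_one, ← esymm_one (Fin r) ℚ, smul_eq_C_mul, hcast]
      linear_combination ((-1 : MvPolynomial (Fin r) ℚ)) ^ (n + 1) * esymm (Fin r) ℚ 1 ^ (n + 2) * hC
    rw [heq]
    exact Ideal.mul_mem_left _ _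
      (I.sub_mem (Ideal.mul_mem_left _ _ h2) (Ideal.mul_mem_left _ _ h1))
  have hsplit : A - (∑ a ∈ ((Finset.HasAntidiagonal.antidiagonal (n + 2)).filter
        (fun a => a.1 ∈ Set.Ioo 0 (n + 2))).erase (n + 1, 1), f a + f (n + 1, 1))
      = (A - f (n + 1, 1)) - (∑ a ∈ ((Finset.HasAntidiagonal.antidiagonal (n + 2)).filter
        (fun a => a.1 ∈ Set.Ioo 0 (n + 2))).erase (n + 1, 1), f a) := by ring
  rw [hsplit]
  exact I.sub_mem hkey hS'
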